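/- Let ⟨γX, γ⟩ be a Hausdorff compactification of a non-empty topological space X such that the space γX is completely regular. Then γX is generated by the set F = C_γ(X): that is, F ∈ E(X), the space e_F X is compact, and the compactification ⟨e_F X, e_F⟩ is equivalent with ⟨γX, γ⟩. -/

import Mathlib

open Topology

/-- For `F ⊆ C*(X)`, the evaluation map `e_F : X → ℝ^F`, `e_F(x)(f) = f(x)`. -/
def evalMap {X : Type*} (F : Set (X → ℝ)) : X → (F → ℝ) :=
  fun x f => (f : X → ℝ) x

/-- Let `⟨γX, γ⟩` be a Hausdorff compactification of a non-empty
topological space `X` such that the space `γX` is completely regular.  Then `γX` is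
generated by the set `F = C_γ(X)` of bounded continuous real functions on `X` that
extend continuously over `γX`: namely `F ∈ E(X)` (all members of `F` are bounded and
continuous and the evaluation map `e_F` is an embedding), the space
`e_F X = cl(e_F(X))` is compact, and the compactification `⟨e_F X, e_F⟩` is
equivalent with `⟨γX, γ⟩`. -/
theorem completelyRegular_compactification_generated_by_Cgamma
    {X : Type*} [TopologicalSpace X] [Nonempty X]
    {G : Type*} [TopologicalSpace G] [CompactSpace G] [T2Space G]
    [CompletelyRegularSpace G]
    (γ : X → G) (hemb : IsEmbedding γ) (hdense : DenseRange γ)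
    (F : Set (X → ℝ))
    (hF : F = {f : X → ℝ | Continuous f ∧ (∃ M : ℝ, ∀ x, |f x| ≤ M) ∧
      ∃ g : G → ℝ, Continuous g ∧ g ∘ γ = f}) :
    (∀ f ∈ F, Continuous f ∧ ∃ M : ℝ, ∀ x, |f x| ≤ M) ∧
    IsEmbedding (evalMap F) ∧
    IsCompact (closure (Set.range (evalMap F))) ∧
    ∃ h : G ≃ₜ (closure (Set.range (evalMap F)) : Set (F → ℝ)),
      ∀ x : X, (h (γ x) : F → ℝ) = evalMap F x := by
  have hmem' : ∀ f ∈ F, ∃ g : G → ℝ, Continuous g ∧ g ∘ γ = f := by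
    rw [hF]; exact fun f hf => hf.2.2
  have hmem : ∀ f : F, ∃ g : G → ℝ, Continuous g ∧ g ∘ γ = (f : X → ℝ) :=
    fun f => hmem' f.1 f.2
  choose ext hc hext using hmem
  set Φ : G → (F → ℝ) := fun g f => ext f g with hΦ
  have Φcont : Continuous Φ := continuous_pi fun f => hc f
  have hcomp : Φ ∘ γ = evalMap F := by
    funext x
    funext f
    exact congrFun (hext f) x
  have Φinj : Function.Injective Φ := by
    intro a b hab
    by_contra hne
    obtain ⟨u, ucont, ua, ub⟩ :=
      CompletelyRegularSpace.completely_regular a {b} isClosed_singleton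
        (by simpa using hne)
    set h : G → ℝ := fun g => (u g : ℝ) with hh
    have hcont : Continuous h := continuous_subtype_val.comp ucont
    have hfmem : (h ∘ γ) ∈ F := by
      rw [hF]
      refine ⟨hcont.comp hemb.continuous, ⟨1, fun x => ?_⟩, h, hcont, rfl⟩
      have h0 := (u (γ x)).2.1
      have h1 := (u (γ x)).2.2
      rw [abs_le]
      constructor <;> simp only [Function.comp_apply, hh] <;> linarith
    have hextu : ext ⟨h ∘ γ, hfmem⟩ = h := by
      refine hdense.equalizer (hc _) hcont ?_
      rw [hext ⟨h ∘ γ, hfmem⟩]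
    have : h a = h b := by
      have := congrFun hab ⟨h ∘ γ, hfmem⟩
      simpa [hΦ, hextu] using this
    have hub : u b = 1 := ub rfl
    rw [hh] at this
    simp only [ua, hub] at this
    norm_num at this
  have Φclosed : IsClosedEmbedding Φ := Φcont.isClosedEmbedding Φinj
  have hrange : Set.range Φ = closure (Set.range (evalMap F)) := by
    apply le_antisymm
    · intro y hy
      obtain ⟨g, rfl⟩ := hy
      have hg : g ∈ closure (Set.range γ) := by
        rw [hdense.closure_range]; trivial
      have : Φ g ∈ closure (Φ '' Set.range γ) := by
        have := image_closure_subset_closure_image (f := Φ) Φcont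
          (s := Set.range γ)
        exact this ⟨g, hg, rfl⟩
      have : Φ '' Set.range γ = Set.range (evalMap F) := by
        rw [← Set.range_comp, hcomp]
      rwa [this] at ‹Φ _ ∈ _›
    · apply closure_minimal
      · rw [← hcomp, Set.range_comp]
        exact Set.image_subset_range _ _
      · exact (isCompact_range Φcont).isClosed
  refine ⟨?_, ?_, ?_, ?_⟩
  · intro f hf
    rw [hF] at hf
    exact ⟨hf.1, hf.2.1⟩
  · rw [← hcomp]
    exact Φclosed.isEmbedding.comp hemb
  · rw [← hrange]
    exact isCompact_range Φcont
  · refine ⟨(Φclosed.isEmbedding.toHomeomorph).trans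
      (Homeomorph.setCongr hrange), fun x => ?_⟩
    have : Φ (γ x) = evalMap F x := congrFun hcomp x
    simpa [Homeomorph.trans_apply, Homeomorph.setCongr, IsEmbedding.toHomeomorph_apply_coe]
      using this
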